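/- Corollary 5 key estimate: Let S = {0,1}, Q_0 a probability on S^∞ under which the sequence is exchangeable with V = μ{1} = a.s. limit of μ_n{1}, V_n = E_{Q_0}(V|G_n). If h: (0,1) → ℝ is Lipschitz with constant d and f = h(V) is a density of P with respect to Q_0, then E_{Q_0}(f²) − E_{Q_0}(E_{Q_0}(f|G_n)²) ≤ (16 d²/n) E_{Q_0}(‖W_n‖²), where ‖W_n‖ = sup_B |W_n(B)| over the power set of S and √n|V − V_n| ≤ ‖C_n^{Q_0}‖ + ‖W_n‖. -/

import Mathlib

set_option maxHeartbeats 1000000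



open MeasureTheory Filter Set

/-- The σ-field generated by the first `n` coordinates. -/
noncomputable def cylG (S : Type*) [MeasurableSpace S] (n : ℕ) : MeasurableSpace (ℕ → S) :=
  MeasurableSpace.comap (fun ω (i : Fin n) => ω i) inferInstance

/-- Empirical frequency of `B` among the first `n` observations. -/
noncomputable def empMeas {S : Type*} (n : ℕ) (B : Set S) (ω : ℕ → S) : ℝ :=
  (n : ℝ)⁻¹ * ∑ i ∈ Finset.range n, B.indicator (fun _ => (1 : ℝ)) (ω i)

/-- The predictive probability `a_n(B) = P(X_{n+1} ∈ B ∣ G_n)` (0-indexed). -/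
noncomputable def predProb {S : Type*} [MeasurableSpace S] (P : Measure (ℕ → S))
    (n : ℕ) (B : Set S) : (ℕ → S) → ℝ :=
  P[fun ω => B.indicator (fun _ => (1 : ℝ)) (ω n) | cylG S n]

/-- The coordinate sequence is conditionally identically distributed under `P`. -/
def CID {S : Type*} [MeasurableSpace S] (P : Measure (ℕ → S)) : Prop :=
  ∀ B : Set S, MeasurableSet B → ∀ n k : ℕ, n < k →
    (P[fun ω => B.indicator (fun _ => (1 : ℝ)) (ω k) | cylG S n])
      =ᵐ[P] P[fun ω => B.indicator (fun _ => (1 : ℝ)) (ω n) | cylG S n]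

/-- `W_n(B) = √n (μ_n(B) - μ(B))`, given the limit random measure `μ` (as `μlim`). -/
noncomputable def Wn {S : Type*} (μlim : Set S → (ℕ → S) → ℝ) (n : ℕ) (B : Set S)
    (ω : ℕ → S) : ℝ :=
  Real.sqrt n * (empMeas n B ω - μlim B ω)

/-- `D` is countably determined: some countable `D₀ ⊆ D` realizes the same sup-distance
between any two probability laws on `S`. -/
def CountablyDetermined {S : Type*} [MeasurableSpace S] (D : Set (Set S)) : Prop :=
  (∀ B ∈ D, MeasurableSet B) ∧
  ∃ D0 ⊆ D, D0.Countable ∧ ∀ ν1 ν2 : Measure S, IsProbabilityMeasure ν1 →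
    IsProbabilityMeasure ν2 →
    (⨆ B : D0, |(ν1 B).toReal - (ν2 B).toReal|) = ⨆ B : D, |(ν1 B).toReal - (ν2 B).toReal|

section Helpers

variable {Ω : Type*} {m m0 : MeasurableSpace Ω} {μ : Measure Ω} [IsProbabilityMeasure μ]

lemma integrable_of_ae_bound {f : Ω → ℝ} {C : ℝ} (hfm : AEStronglyMeasurable f μ)
    (hbd : ∀ᵐ ω ∂μ, |f ω| ≤ C) : Integrable f μ :=
  Integrable.mono' (integrable_const C) hfm (by simpa [Real.norm_eq_abs] using hbd)

lemma sq_integrable_of_ae_bound {f : Ω → ℝ} {C : ℝ} (hfm : AEStronglyMeasurable f μ)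
    (hbd : ∀ᵐ ω ∂μ, |f ω| ≤ C) : Integrable (fun ω => f ω ^ 2) μ := by
  refine integrable_of_ae_bound (C := C ^ 2)
    ((hfm.mul hfm).congr (Eventually.of_forall fun ω => (sq (f ω)).symm)) ?_
  filter_upwards [hbd] with ω hω
  rw [abs_pow]
  have h0 : (0:ℝ) ≤ |f ω| := abs_nonneg _
  nlinarith

omit [IsProbabilityMeasure μ] in
lemma abs_condexp_le_condexp_abs {f : Ω → ℝ} (hf : Integrable f μ) :
    ∀ᵐ ω ∂μ, |(μ[f|m]) ω| ≤ (μ[(abs ∘ f)|m]) ω := by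
  have habs : Integrable (abs ∘ f) μ := hf.abs
  have h1 : μ[f|m] ≤ᵐ[μ] μ[(abs ∘ f)|m] :=
    condExp_mono hf habs (Eventually.of_forall fun ω => le_abs_self _)
  have h2 : μ[-f|m] ≤ᵐ[μ] μ[(abs ∘ f)|m] :=
    condExp_mono hf.neg habs (Eventually.of_forall fun ω => by simpa using neg_le_abs (f ω))
  have h3 := condExp_neg (μ := μ) (m := m) f
  filter_upwards [h1, h2, h3] with ω h1 h2 h3
  rw [abs_le]
  constructor
  · have h4 : (μ[-f|m]) ω = -(μ[f|m]) ω := h3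
    linarith [h4 ▸ h2]
  · exact h1

lemma abs_condexp_le_of_ae_bound (hm : m ≤ m0) {f : Ω → ℝ} {C : ℝ}
    (hf : Integrable f μ) (hbd : ∀ᵐ ω ∂μ, |f ω| ≤ C) :
    ∀ᵐ ω ∂μ, |(μ[f|m]) ω| ≤ C := by
  have h1 := abs_condexp_le_condexp_abs (m := m) hf
  have h2 : μ[(abs ∘ f)|m] ≤ᵐ[μ] μ[(fun _ => C)|m] :=
    condExp_mono hf.abs (integrable_const C) hbd
  have h3 : μ[(fun _ : Ω => C)|m] = fun _ => C := condExp_const hm C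
  filter_upwards [h1, h2] with ω h1 h2
  exact h1.trans (h2.trans_eq (by rw [h3]))

/-- `∫ f² - ∫ (E[f|m])² = ∫ (f - E[f|m])²` for bounded `f`. -/
lemma integral_sq_sub_condexp_sq (hm : m ≤ m0) {f : Ω → ℝ} {C : ℝ}
    (hfm : AEStronglyMeasurable f μ) (hbd : ∀ᵐ ω ∂μ, |f ω| ≤ C) :
    (∫ ω, f ω ^ 2 ∂μ) - ∫ ω, (μ[f|m]) ω ^ 2 ∂μ
      = ∫ ω, (f ω - (μ[f|m]) ω) ^ 2 ∂μ := by
  have hC : 0 ≤ C := by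
    rcases hbd.exists with ⟨ω, hω⟩; exact (abs_nonneg _).trans hω
  set g : Ω → ℝ := μ[f|m] with hg
  have hfint : Integrable f μ := integrable_of_ae_bound hfm hbd
  have hgm : StronglyMeasurable[m] g := stronglyMeasurable_condExp
  have hgm0 : AEStronglyMeasurable g μ := (hgm.mono hm).aestronglyMeasurable
  have hgbd : ∀ᵐ ω ∂μ, |g ω| ≤ C := abs_condexp_le_of_ae_bound hm hfint hbd
  have hf2 : Integrable (fun ω => f ω ^ 2) μ := sq_integrable_of_ae_bound hfm hbd
  have hg2 : Integrable (fun ω => g ω ^ 2) μ := sq_integrable_of_ae_bound hgm0 hgbd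
  have hgf : Integrable (g * f) μ := by
    refine integrable_of_ae_bound (C := C * C) (hgm0.mul hfm) ?_
    filter_upwards [hbd, hgbd] with ω h1 h2
    calc |(g * f) ω| = |g ω| * |f ω| := abs_mul _ _
      _ ≤ C * C := mul_le_mul h2 h1 (abs_nonneg _) hC
  have hgf' : Integrable (fun ω => 2 * (g ω * f ω)) μ :=
    (hgf.const_mul 2).congr (Eventually.of_forall fun ω => rfl)
  have hkey : ∫ ω, g ω * f ω ∂μ = ∫ ω, g ω ^ 2 ∂μ := by
    have hpull : μ[g * f|m] =ᵐ[μ] g * μ[f|m] :=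
      condExp_stronglyMeasurable_mul_of_bound hm hgm hfint C
        (by simpa [Real.norm_eq_abs] using hgbd)
    calc ∫ ω, g ω * f ω ∂μ = ∫ ω, (g * f) ω ∂μ := rfl
      _ = ∫ ω, (μ[g * f|m]) ω ∂μ := (integral_condExp hm).symm
      _ = ∫ ω, (g * μ[f|m]) ω ∂μ := integral_congr_ae hpull
      _ = ∫ ω, g ω ^ 2 ∂μ := by
          refine integral_congr_ae (Eventually.of_forall fun ω => ?_)
          simp [← hg, sq]
  calc (∫ ω, f ω ^ 2 ∂μ) - ∫ ω, g ω ^ 2 ∂μ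
      = ((∫ ω, f ω ^ 2 ∂μ) - ∫ ω, 2 * (g ω * f ω) ∂μ) + ∫ ω, g ω ^ 2 ∂μ := by
        rw [integral_const_mul 2]; rw [hkey]; ring
    _ = ∫ ω, (f ω ^ 2 - 2 * (g ω * f ω) + g ω ^ 2) ∂μ := by
        have e1 : ∫ ω, (f ω ^ 2 - 2 * (g ω * f ω) + g ω ^ 2) ∂μ
            = (∫ ω, (f ω ^ 2 - 2 * (g ω * f ω)) ∂μ) + ∫ ω, g ω ^ 2 ∂μ :=
          integral_add (hf2.sub hgf') hg2
        have e2 : ∫ ω, (f ω ^ 2 - 2 * (g ω * f ω)) ∂μ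
            = (∫ ω, f ω ^ 2 ∂μ) - ∫ ω, 2 * (g ω * f ω) ∂μ := integral_sub hf2 hgf'
        rw [e1, e2]
    _ = ∫ ω, (f ω - g ω) ^ 2 ∂μ :=
        integral_congr_ae (Eventually.of_forall fun ω => by ring_nf)

/-- L² contraction of conditional expectation, for bounded `f`. -/
lemma integral_condExp_sq_le (hm : m ≤ m0) {f : Ω → ℝ} {C : ℝ}
    (hfm : AEStronglyMeasurable f μ) (hbd : ∀ᵐ ω ∂μ, |f ω| ≤ C) :
    (∫ ω, (μ[f|m]) ω ^ 2 ∂μ) ≤ ∫ ω, f ω ^ 2 ∂μ := by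
  have := integral_sq_sub_condexp_sq hm hfm hbd
  have hpos : (0:ℝ) ≤ ∫ ω, (f ω - (μ[f|m]) ω) ^ 2 ∂μ :=
    integral_nonneg fun ω => sq_nonneg _
  linarith

lemma cylG_le (S : Type*) [MeasurableSpace S] (n : ℕ) :
    cylG S n ≤ (inferInstance : MeasurableSpace (ℕ → S)) :=
  measurable_iff_comap_le.mp (measurable_pi_lambda _ fun i => measurable_pi_apply _)

lemma empMeas_mem_Icc {S : Type*} (n : ℕ) (B : Set S) (ω : ℕ → S) :
    empMeas n B ω ∈ Icc (0:ℝ) 1 := by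
  have hind : ∀ x : S, B.indicator (fun _ => (1:ℝ)) x ∈ Icc (0:ℝ) 1 := by
    intro x; by_cases hx : x ∈ B <;> simp [hx]
  have hs0 : (0:ℝ) ≤ ∑ i ∈ Finset.range n, B.indicator (fun _ => (1:ℝ)) (ω i) :=
    Finset.sum_nonneg fun i _ => (hind (ω i)).1
  have hs1 : (∑ i ∈ Finset.range n, B.indicator (fun _ => (1:ℝ)) (ω i)) ≤ n := by
    calc (∑ i ∈ Finset.range n, B.indicator (fun _ => (1:ℝ)) (ω i))
        ≤ ∑ _i ∈ Finset.range n, (1:ℝ) := Finset.sum_le_sum fun i _ => (hind (ω i)).2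
      _ = n := by simp
  constructor
  · exact mul_nonneg (by positivity) hs0
  · rcases Nat.eq_zero_or_pos n with hn | hn
    · simp [empMeas, hn]
    · have hnR : (0:ℝ) < n := by exact_mod_cast hn
      rw [empMeas]
      calc (n : ℝ)⁻¹ * ∑ i ∈ Finset.range n, B.indicator (fun _ => (1:ℝ)) (ω i)
          ≤ (n:ℝ)⁻¹ * n := mul_le_mul_of_nonneg_left hs1 (by positivity)
        _ = 1 := inv_mul_cancel₀ hnR.ne'

lemma empMeas_stronglyMeasurable (n : ℕ) (B : Set Bool) :
    StronglyMeasurable[cylG Bool n] (empMeas n B) := by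
  have heq : empMeas n B = (fun x : Fin n → Bool =>
      (n : ℝ)⁻¹ * ∑ i : Fin n, B.indicator (fun _ => (1 : ℝ)) (x i)) ∘
      (fun ω (i : Fin n) => ω i) := by
    funext ω
    simp only [empMeas, Function.comp_apply]
    rw [Fin.sum_univ_eq_sum_range (fun i => B.indicator (fun _ => (1:ℝ)) (ω i)) n]
  rw [heq]
  have hπ : Measurable[cylG Bool n] (fun ω (i : Fin n) => ω i) :=
    measurable_iff_comap_le.mpr le_rfl
  exact ((measurable_of_countable _).comp hπ).stronglyMeasurable

lemma empMeas_measurable (n : ℕ) (B : Set Bool) : Measurable (empMeas n B) :=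
  ((empMeas_stronglyMeasurable n B).mono (cylG_le Bool n)).measurable

end Helpers

/-- Corollary 5 key estimate, for `S = {0,1}` (modelled as `Bool`, with `1 = true`). -/


theorem stmt12 (P Q0 : Measure (ℕ → Bool))
    [IsProbabilityMeasure P] [IsProbabilityMeasure Q0]
    -- exchangeability of the coordinate sequence under `Q₀`:
    (hexch : ∀ σ : Equiv.Perm ℕ, (∃ m, ∀ k ≥ m, σ k = k) →
      Q0.map (fun ω => ω ∘ σ) = Q0)
    (μlim : Set Bool → (ℕ → Bool) → ℝ) (hmeas : ∀ B, Measurable (μlim B))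
    (hlim : ∀ B : Set Bool, ∀ᵐ ω ∂Q0,
      Tendsto (fun n => empMeas n B ω) atTop (nhds (μlim B ω)))
    -- `h` Lipschitz with constant `d`, and `f = h(V)` density of `P` w.r.t. `Q₀`,
    -- where `V = μ{1}`:
    (d : ℝ) (hd : 0 ≤ d) (h : ℝ → ℝ) (hLip : LipschitzWith d.toNNReal h)
    (hPQ : P = Q0.withDensity (fun ω => ENNReal.ofReal (h (μlim {true} ω)))) :
    ∀ n : ℕ, 1 ≤ n →
      (∫ ω, (h (μlim {true} ω)) ^ 2 ∂Q0)
        - ∫ ω, ((Q0[fun ω' => h (μlim {true} ω') | cylG Bool n]) ω) ^ 2 ∂Q0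
      ≤ (16 * d ^ 2 / n) * ∫ ω, (⨆ B : Set Bool, |Wn μlim n B ω|) ^ 2 ∂Q0 := by
  intro n hn
  have hn0 : (0:ℝ) < n := by exact_mod_cast hn
  have hm : cylG Bool n ≤ (inferInstance : MeasurableSpace (ℕ → Bool)) := cylG_le Bool n
  -- Lipschitz in convenient form
  have hL : ∀ x y : ℝ, |h x - h y| ≤ d * |x - y| := by
    intro x y
    have := hLip.dist_le_mul x y
    rwa [Real.dist_eq, Real.dist_eq, Real.coe_toNNReal d hd] at this
  -- a.e. bounds on μlim
  have hμB : ∀ᵐ ω ∂Q0, ∀ B : Set Bool, μlim B ω ∈ Icc (0:ℝ) 1 := by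
    rw [ae_all_iff]
    intro B
    filter_upwards [hlim B] with ω hω
    exact isClosed_Icc.mem_of_tendsto hω
      (Eventually.of_forall fun k => empMeas_mem_Icc k B ω)
  have habs_h : ∀ x : ℝ, |x| ≤ 1 → |h x| ≤ |h 0| + d := by
    intro x hx
    have h1 := hL x 0
    have h2 := abs_add_le (h x - h 0) (h 0)
    rw [sub_add_cancel] at h2
    simp only [sub_zero] at h1
    nlinarith [abs_nonneg x]
  -- notation
  set V : (ℕ → Bool) → ℝ := μlim {true} with hVdef
  set f : (ℕ → Bool) → ℝ := fun ω' => h (μlim {true} ω') with hfdef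
  set En : (ℕ → Bool) → ℝ := empMeas n {true} with hEndef
  set S : (ℕ → Bool) → ℝ := fun ω => ⨆ B : Set Bool, |Wn μlim n B ω| with hSdef
  set g : (ℕ → Bool) → ℝ := Q0[f | cylG Bool n] with hgdef
  set Vn : (ℕ → Bool) → ℝ := Q0[V | cylG Bool n] with hVndef
  show (∫ ω, f ω ^ 2 ∂Q0) - ∫ ω, g ω ^ 2 ∂Q0
      ≤ (16 * d ^ 2 / n) * ∫ ω, S ω ^ 2 ∂Q0
  -- basic measurability and bounds
  have hVmeas : Measurable V := hmeas {true}
  have hVbd : ∀ᵐ ω ∂Q0, |V ω| ≤ 1 := by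
    filter_upwards [hμB] with ω hω
    have := hω {true}
    rw [abs_le]; exact ⟨by linarith [this.1], this.2⟩
  have hVint : Integrable V Q0 := integrable_of_ae_bound hVmeas.aestronglyMeasurable hVbd
  have hEnSM : StronglyMeasurable[cylG Bool n] En := empMeas_stronglyMeasurable n {true}
  have hEnmeas : Measurable En := empMeas_measurable n {true}
  have hEnbd : ∀ ω, |En ω| ≤ 1 := by
    intro ω
    have := empMeas_mem_Icc n {true} ω
    rw [abs_le]; exact ⟨by linarith [this.1], this.2⟩
  have hEnint : Integrable En Q0 :=
    integrable_of_ae_bound hEnmeas.aestronglyMeasurable (Eventually.of_forall hEnbd)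
  have hfmeas : Measurable f := (hLip.continuous.measurable).comp hVmeas
  have hCf : (0:ℝ) ≤ |h 0| + d := by positivity
  have hfbd : ∀ᵐ ω ∂Q0, |f ω| ≤ |h 0| + d := by
    filter_upwards [hVbd] with ω hω
    exact habs_h (V ω) hω
  have hfint : Integrable f Q0 := integrable_of_ae_bound hfmeas.aestronglyMeasurable hfbd
  have hVnSM : StronglyMeasurable[cylG Bool n] Vn := stronglyMeasurable_condExp
  have hVnAE : AEStronglyMeasurable Vn Q0 := (hVnSM.mono hm).aestronglyMeasurable
  have hVnbd : ∀ᵐ ω ∂Q0, |Vn ω| ≤ 1 := abs_condexp_le_of_ae_bound hm hVint hVbd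
  have hVnint : Integrable Vn Q0 := integrable_condExp
  have hgAE : AEStronglyMeasurable g Q0 :=
    ((stronglyMeasurable_condExp (f := f) (m := cylG Bool n)).mono hm).aestronglyMeasurable
  have hgbd : ∀ᵐ ω ∂Q0, |g ω| ≤ |h 0| + d := abs_condexp_le_of_ae_bound hm hfint hfbd
  -- the function A = |V - Vn| and B' = E[A|G]
  set A : (ℕ → Bool) → ℝ := fun ω => |V ω - Vn ω| with hAdef
  have hAAE : AEStronglyMeasurable A Q0 :=
    continuous_abs.comp_aestronglyMeasurable (hVmeas.aestronglyMeasurable.sub hVnAE)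
  have hAbd : ∀ᵐ ω ∂Q0, |A ω| ≤ 2 := by
    filter_upwards [hVbd, hVnbd] with ω h1 h2
    rw [hAdef, abs_abs]
    calc |V ω - Vn ω| ≤ |V ω| + |Vn ω| := abs_sub _ _
      _ ≤ 2 := by linarith
  have hAint : Integrable A Q0 := integrable_of_ae_bound hAAE hAbd
  set B' : (ℕ → Bool) → ℝ := Q0[A | cylG Bool n] with hB'def
  have hB'AE : AEStronglyMeasurable B' Q0 :=
    ((stronglyMeasurable_condExp (f := A) (m := cylG Bool n)).mono hm).aestronglyMeasurable
  have hB'bd : ∀ᵐ ω ∂Q0, |B' ω| ≤ 2 := abs_condexp_le_of_ae_bound hm hAint hAbd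
  -- STEP 1: |f - g| ≤ d A + d B' a.e.
  have hhVn : StronglyMeasurable[cylG Bool n] (fun ω => h (Vn ω)) :=
    hLip.continuous.comp_stronglyMeasurable hVnSM
  have hhVnbd : ∀ᵐ ω ∂Q0, |h (Vn ω)| ≤ |h 0| + d := by
    filter_upwards [hVnbd] with ω hω
    exact habs_h (Vn ω) hω
  have hhVnint : Integrable (fun ω => h (Vn ω)) Q0 :=
    integrable_of_ae_bound ((hhVn.mono hm).aestronglyMeasurable) hhVnbd
  have hhVnfix : Q0[(fun ω => h (Vn ω)) | cylG Bool n] = fun ω => h (Vn ω) :=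
    condExp_of_stronglyMeasurable hm hhVn hhVnint
  set fsub : (ℕ → Bool) → ℝ := fun ω => f ω - h (Vn ω) with hfsubdef
  have hfsubint : Integrable fsub Q0 := hfint.sub hhVnint
  have hsub1 : Q0[fsub | cylG Bool n] =ᵐ[Q0] fun ω => g ω - h (Vn ω) := by
    have e := condExp_sub (m := cylG Bool n) (μ := Q0) hfint hhVnint
    refine e.trans ?_
    rw [hhVnfix]
    exact Eventually.of_forall fun ω => rfl
  have habs1 : ∀ᵐ ω ∂Q0, |(Q0[fsub | cylG Bool n]) ω| ≤ (Q0[(abs ∘ fsub) | cylG Bool n]) ω :=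
    abs_condexp_le_condexp_abs hfsubint
  have hptw : ∀ ω, |fsub ω| ≤ d * A ω := by
    intro ω
    calc |fsub ω| = |h (V ω) - h (Vn ω)| := by rfl
      _ ≤ d * |V ω - Vn ω| := hL _ _
      _ = d * A ω := rfl
  have hdAint : Integrable (fun ω => d * A ω) Q0 := hAint.const_mul d
  have habs2 : Q0[(abs ∘ fsub) | cylG Bool n] ≤ᵐ[Q0] Q0[(fun ω => d * A ω) | cylG Bool n] :=
    condExp_mono hfsubint.abs hdAint (Eventually.of_forall hptw)
  have habs3 : Q0[(fun ω => d * A ω) | cylG Bool n] =ᵐ[Q0] fun ω => d * B' ω := by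
    have := condExp_smul (μ := Q0) (m := cylG Bool n) (𝕜 := ℝ) d A
    refine (Filter.EventuallyEq.trans ?_ this).trans ?_
    · exact Eventually.of_forall fun ω => rfl
    · exact Eventually.of_forall fun ω => rfl
  have hfg_bd : ∀ᵐ ω ∂Q0, |f ω - g ω| ≤ d * A ω + d * B' ω := by
    filter_upwards [hsub1, habs1, habs2, habs3] with ω e1 e2 e3 e4
    have e5 : |g ω - h (Vn ω)| ≤ d * B' ω := by
      rw [← e1]
      calc |(Q0[fsub | cylG Bool n]) ω| ≤ (Q0[(abs ∘ fsub) | cylG Bool n]) ω := e2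
        _ ≤ (Q0[(fun ω => d * A ω) | cylG Bool n]) ω := e3
        _ = d * B' ω := e4
    calc |f ω - g ω| = |fsub ω + (h (Vn ω) - g ω)| := by rw [hfsubdef]; ring_nf
      _ ≤ |fsub ω| + |h (Vn ω) - g ω| := abs_add_le _ _
      _ ≤ d * A ω + d * B' ω := by
          rw [abs_sub_comm] at e5
          linarith [hptw ω]
  -- STEP 2: A ≤ |V - En| + D a.e., where D = E[|V - En| | G]
  set X : (ℕ → Bool) → ℝ := fun ω => V ω - En ω with hXdef
  have hXmeas : Measurable X := hVmeas.sub hEnmeas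
  have hXbd : ∀ᵐ ω ∂Q0, |X ω| ≤ 2 := by
    filter_upwards [hVbd] with ω h1
    calc |X ω| ≤ |V ω| + |En ω| := abs_sub _ _
      _ ≤ 2 := by linarith [hEnbd ω]
  have hXint : Integrable X Q0 := integrable_of_ae_bound hXmeas.aestronglyMeasurable hXbd
  have haXbd : ∀ᵐ ω ∂Q0, |(abs ∘ X) ω| ≤ 2 := by
    filter_upwards [hXbd] with ω h1
    simpa [abs_abs] using h1
  set D : (ℕ → Bool) → ℝ := Q0[(abs ∘ X) | cylG Bool n] with hDdef
  have hDAE : AEStronglyMeasurable D Q0 :=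
    ((stronglyMeasurable_condExp (f := abs ∘ X) (m := cylG Bool n)).mono hm).aestronglyMeasurable
  have hDbd : ∀ᵐ ω ∂Q0, |D ω| ≤ 2 := abs_condexp_le_of_ae_bound hm hXint.abs haXbd
  have hEnfix : Q0[En | cylG Bool n] = En := condExp_of_stronglyMeasurable hm hEnSM hEnint
  have hsub2 : Q0[X | cylG Bool n] =ᵐ[Q0] fun ω => Vn ω - En ω := by
    have e := condExp_sub (m := cylG Bool n) (μ := Q0) hVint hEnint
    refine e.trans ?_
    rw [hEnfix]
    exact Eventually.of_forall fun ω => rfl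
  have hA_le : ∀ᵐ ω ∂Q0, A ω ≤ |X ω| + D ω := by
    have habsX := abs_condexp_le_condexp_abs (m := cylG Bool n) hXint
    filter_upwards [hsub2, habsX] with ω e1 e2
    have e1' : (Q0[X | cylG Bool n]) ω = Vn ω - En ω := e1
    have key : V ω - Vn ω = X ω - (Q0[X | cylG Bool n]) ω := by
      rw [e1']
      show V ω - Vn ω = (V ω - En ω) - (Vn ω - En ω)
      ring
    have hAeq : A ω = |X ω - (Q0[X | cylG Bool n]) ω| := by
      show |V ω - Vn ω| = _
      rw [key]
    rw [hAeq]
    calc |X ω - (Q0[X | cylG Bool n]) ω| ≤ |X ω| + |(Q0[X | cylG Bool n]) ω| := abs_sub _ _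
      _ ≤ |X ω| + D ω := by linarith
  -- Integrability of squares
  have hfgsqint : Integrable (fun ω => (f ω - g ω) ^ 2) Q0 := by
    refine sq_integrable_of_ae_bound (C := 2 * (|h 0| + d))
      (hfmeas.aestronglyMeasurable.sub hgAE) ?_
    filter_upwards [hfbd, hgbd] with ω h1 h2
    calc |f ω - g ω| ≤ |f ω| + |g ω| := abs_sub _ _
      _ ≤ 2 * (|h 0| + d) := by linarith
  have hA2int : Integrable (fun ω => A ω ^ 2) Q0 := sq_integrable_of_ae_bound hAAE hAbd
  have hB2int : Integrable (fun ω => B' ω ^ 2) Q0 := sq_integrable_of_ae_bound hB'AE hB'bd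
  have hX2int : Integrable (fun ω => X ω ^ 2) Q0 :=
    sq_integrable_of_ae_bound hXmeas.aestronglyMeasurable hXbd
  have hD2int : Integrable (fun ω => D ω ^ 2) Q0 := sq_integrable_of_ae_bound hDAE hDbd
  -- S measurability and bound
  have hWnmeas : ∀ B : Set Bool, Measurable (fun ω => |Wn μlim n B ω|) := by
    intro B
    have : Measurable (fun ω => Wn μlim n B ω) :=
      (measurable_const.mul ((empMeas_measurable n B).sub (hmeas B)))
    exact this.abs
  have hSmeas : Measurable S := Measurable.iSup hWnmeas
  have hSbd : ∀ᵐ ω ∂Q0, |S ω| ≤ 2 * Real.sqrt n := by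
    filter_upwards [hμB] with ω hω
    have hub : ∀ B : Set Bool, |Wn μlim n B ω| ≤ 2 * Real.sqrt n := by
      intro B
      rw [Wn, abs_mul, abs_of_nonneg (Real.sqrt_nonneg _)]
      have h1 : |empMeas n B ω - μlim B ω| ≤ 2 := by
        have e1 := empMeas_mem_Icc n B ω
        have e2 := hω B
        rw [abs_le]
        constructor <;> [linarith [e1.1, e2.2]; linarith [e1.2, e2.1]]
      nlinarith [Real.sqrt_nonneg (n:ℝ)]
    have hS_le : S ω ≤ 2 * Real.sqrt n := ciSup_le hub
    have hS_ge : 0 ≤ S ω := by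
      refine le_trans (abs_nonneg (Wn μlim n {true} ω)) ?_
      have hbdd : BddAbove (Set.range fun B : Set Bool => |Wn μlim n B ω|) :=
        Set.Finite.bddAbove (Set.finite_range _)
      exact le_ciSup hbdd {true}
    rw [abs_of_nonneg hS_ge]; exact hS_le
  have hS2int : Integrable (fun ω => S ω ^ 2) Q0 :=
    sq_integrable_of_ae_bound hSmeas.aestronglyMeasurable hSbd
  -- pointwise: X² ≤ (1/n) S²
  have hXS : ∀ ω, X ω ^ 2 ≤ (1 / n) * S ω ^ 2 := by
    intro ω
    have h1 : |Wn μlim n {true} ω| ≤ S ω := by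
      have hbdd : BddAbove (Set.range fun B : Set Bool => |Wn μlim n B ω|) :=
        Set.Finite.bddAbove (Set.finite_range _)
      exact le_ciSup hbdd {true}
    have h2 : Wn μlim n {true} ω ^ 2 = (n : ℝ) * X ω ^ 2 := by
      rw [Wn]
      rw [mul_pow, Real.sq_sqrt (by positivity : (0:ℝ) ≤ (n:ℝ))]
      have : (empMeas n {true} ω - μlim {true} ω) ^ 2 = X ω ^ 2 := by
        show (En ω - V ω) ^ 2 = (V ω - En ω) ^ 2; ring
      rw [this]
    have h3 : Wn μlim n {true} ω ^ 2 ≤ S ω ^ 2 := by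
      have := abs_nonneg (Wn μlim n {true} ω)
      nlinarith [sq_abs (Wn μlim n {true} ω)]
    rw [h2] at h3
    rw [div_mul_eq_mul_div, one_mul, le_div_iff₀ hn0] at *
    nlinarith
  -- integral chain
  have eq1 : (∫ ω, f ω ^ 2 ∂Q0) - ∫ ω, g ω ^ 2 ∂Q0 = ∫ ω, (f ω - g ω) ^ 2 ∂Q0 :=
    integral_sq_sub_condexp_sq hm hfmeas.aestronglyMeasurable hfbd
  have s1 : (∫ ω, (f ω - g ω) ^ 2 ∂Q0)
      ≤ 2 * d ^ 2 * (∫ ω, A ω ^ 2 ∂Q0) + 2 * d ^ 2 * (∫ ω, B' ω ^ 2 ∂Q0) := by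
    have hmono : (∫ ω, (f ω - g ω) ^ 2 ∂Q0)
        ≤ ∫ ω, (2 * d ^ 2 * A ω ^ 2 + 2 * d ^ 2 * B' ω ^ 2) ∂Q0 := by
      refine integral_mono_ae hfgsqint ((hA2int.const_mul _).add (hB2int.const_mul _)) ?_
      filter_upwards [hfg_bd] with ω hω
      have hA0 : 0 ≤ A ω := abs_nonneg _
      have habs0 : 0 ≤ |f ω - g ω| := abs_nonneg _
      nlinarith [sq_abs (f ω - g ω), sq_nonneg (d * A ω - d * B' ω), sq_nonneg (f ω - g ω)]
    calc (∫ ω, (f ω - g ω) ^ 2 ∂Q0)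
        ≤ ∫ ω, (2 * d ^ 2 * A ω ^ 2 + 2 * d ^ 2 * B' ω ^ 2) ∂Q0 := hmono
      _ = 2 * d ^ 2 * (∫ ω, A ω ^ 2 ∂Q0) + 2 * d ^ 2 * (∫ ω, B' ω ^ 2 ∂Q0) := by
          rw [integral_add (hA2int.const_mul _) (hB2int.const_mul _),
            integral_const_mul, integral_const_mul]
  have s2 : (∫ ω, B' ω ^ 2 ∂Q0) ≤ ∫ ω, A ω ^ 2 ∂Q0 :=
    integral_condExp_sq_le hm hAAE hAbd
  have s3 : (∫ ω, A ω ^ 2 ∂Q0)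
      ≤ 2 * (∫ ω, X ω ^ 2 ∂Q0) + 2 * (∫ ω, D ω ^ 2 ∂Q0) := by
    have hmono : (∫ ω, A ω ^ 2 ∂Q0) ≤ ∫ ω, (2 * X ω ^ 2 + 2 * D ω ^ 2) ∂Q0 := by
      refine integral_mono_ae hA2int ((hX2int.const_mul _).add (hD2int.const_mul _)) ?_
      filter_upwards [hA_le] with ω hω
      have hA0 : 0 ≤ A ω := abs_nonneg _
      nlinarith [sq_abs (X ω), sq_nonneg (|X ω| - D ω), abs_nonneg (X ω)]
    calc (∫ ω, A ω ^ 2 ∂Q0) ≤ ∫ ω, (2 * X ω ^ 2 + 2 * D ω ^ 2) ∂Q0 := hmono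
      _ = 2 * (∫ ω, X ω ^ 2 ∂Q0) + 2 * (∫ ω, D ω ^ 2 ∂Q0) := by
          rw [integral_add (hX2int.const_mul _) (hD2int.const_mul _),
            integral_const_mul, integral_const_mul]
  have s4 : (∫ ω, D ω ^ 2 ∂Q0) ≤ ∫ ω, X ω ^ 2 ∂Q0 := by
    have := integral_condExp_sq_le (μ := Q0) hm (f := abs ∘ X) (C := 2)
      hXmeas.abs.aestronglyMeasurable haXbd
    have e : (∫ ω, (abs ∘ X) ω ^ 2 ∂Q0) = ∫ ω, X ω ^ 2 ∂Q0 :=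
      integral_congr_ae (Eventually.of_forall fun ω => by simp [sq_abs])
    rw [e] at this
    exact this
  have s5 : (∫ ω, X ω ^ 2 ∂Q0) ≤ (1 / n) * ∫ ω, S ω ^ 2 ∂Q0 := by
    calc (∫ ω, X ω ^ 2 ∂Q0) ≤ ∫ ω, (1 / n) * S ω ^ 2 ∂Q0 :=
        integral_mono_ae hX2int (hS2int.const_mul _) (Eventually.of_forall hXS)
      _ = (1 / n) * ∫ ω, S ω ^ 2 ∂Q0 := integral_const_mul _ _
  -- conclude
  set IS := ∫ ω, S ω ^ 2 ∂Q0 with hIS0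
  set IX := ∫ ω, X ω ^ 2 ∂Q0 with hIX0
  set IA := ∫ ω, A ω ^ 2 ∂Q0 with hIA0
  set IB := ∫ ω, B' ω ^ 2 ∂Q0 with hIB0
  set ID := ∫ ω, D ω ^ 2 ∂Q0 with hID0
  set IFG := ∫ ω, (f ω - g ω) ^ 2 ∂Q0 with hIFG0
  have m1 := mul_le_mul_of_nonneg_left s2 (show (0:ℝ) ≤ 2 * d ^ 2 by positivity)
  have m2 := mul_le_mul_of_nonneg_left s3 (show (0:ℝ) ≤ 4 * d ^ 2 by positivity)
  have m3 := mul_le_mul_of_nonneg_left s4 (show (0:ℝ) ≤ 8 * d ^ 2 by positivity)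
  have m4 := mul_le_mul_of_nonneg_left s5 (show (0:ℝ) ≤ 16 * d ^ 2 by positivity)
  have hring : 16 * d ^ 2 * ((1 / (n:ℝ)) * IS) = 16 * d ^ 2 / (n:ℝ) * IS := by ring
  rw [eq1]
  linarith
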